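/- Let $R$ be a local ring, let $S \in \mathrm{Mat}_{n\times d}(R)$ have some $d\times d$ minor equal to a unit, let $M \subseteq R^n$ be the column space of $S$, and let $U \subseteq R^n$ be the submodule generated by the columns $f_0,\dots,f_{c-1}$ of a matrix $F \in \mathrm{Mat}_{n\times c}(R)$. Then the following are equivalent: (1) $U \subseteq M$; (2) all $(d+1)\times(d+1)$ minors of the block matrix $(S \mid F)$ vanish; (3) all $(d+1)\times(d+1)$ minors of $(S\mid F)$ using exactly $d$ columns from $S$ and one column from $F$ vanish; (4) $p \wedge f_i = 0$ in $\bigwedge^{d+1} R^n$ for all $i$, where $p = s_0 \wedge \cdots \wedge s_{d-1}$ is the wedge of the columns of $S$. -/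

import Mathlib

open Matrix ExteriorAlgebra

/-- An alternating map in `d+1` arguments vanishes on vectors lying in the span of `d` vectors. -/
private lemma alt_zero_of_span {R : Type*} [CommRing R] {M N : Type*} [AddCommGroup M] [Module R M]
    [AddCommGroup N] [Module R N] {d : ℕ} (f : M [⋀^Fin (d + 1)]→ₗ[R] N) (s : Fin d → M)
    (v : Fin (d + 1) → M) (hv : ∀ k, v k ∈ Submodule.span R (Set.range s)) : f v = 0 := by
  classical
  choose C hC using fun k => (Submodule.mem_span_range_iff_exists_fun R).1 (hv k)
  have hv' : v = fun k => ∑ j, C k j • s j := by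
    funext k; exact (hC k).symm
  rw [hv']
  rw [show (f fun k => ∑ j, C k j • s j) =
      f.toMultilinearMap fun k => ∑ j, C k j • s j from rfl]
  rw [MultilinearMap.map_sum]
  refine Finset.sum_eq_zero fun r _ => ?_
  have h0 : f.toMultilinearMap (fun k => C k (r k) • s (r k)) =
      (∏ k, C k (r k)) • f.toMultilinearMap (fun k => s (r k)) :=
    f.toMultilinearMap.map_smul_univ _ _
  rw [h0]
  obtain ⟨a, b, hne, hab⟩ := Fintype.exists_ne_map_eq_of_card_lt r (by simp)
  have hz : f (fun k => s (r k)) = 0 := f.map_eq_zero_of_eq _ (congrArg s hab) hne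
  rw [show f.toMultilinearMap (fun k => s (r k)) = f (fun k => s (r k)) from rfl, hz, smul_zero]

private lemma prod_mul_iota {R : Type*} [CommRing R] {M : Type*} [AddCommGroup M] [Module R M]
    {d : ℕ} (v : Fin d → M) (x : M) :
    ((List.finRange d).map fun j => ExteriorAlgebra.ι R (v j)).prod * ExteriorAlgebra.ι R x =
      ExteriorAlgebra.ιMulti R (d + 1) (Fin.snoc v x) := by
  rw [ιMulti_apply, List.ofFn_succ']
  simp only [Fin.snoc_castSucc, Fin.snoc_last, List.prod_concat, List.ofFn_eq_map]

theorem stmt6 (R : Type*) [CommRing R] [IsLocalRing R] (n d c : ℕ)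
    (S : Matrix (Fin n) (Fin d) R) (F : Matrix (Fin n) (Fin c) R)
    (hS : ∃ α : Fin d → Fin n, StrictMono α ∧ IsUnit (S.submatrix α id).det) :
    ((Submodule.span R {v : Fin n → R | ∃ l : Fin c, v = fun i => F i l} ≤
        Submodule.span R {v : Fin n → R | ∃ j : Fin d, v = fun i => S i j}) ↔
      ∀ (ρ : Fin (d + 1) → Fin n) (σ : Fin (d + 1) → Fin d ⊕ Fin c),
        ((Matrix.fromCols S F).submatrix ρ σ).det = 0) ∧
    ((Submodule.span R {v : Fin n → R | ∃ l : Fin c, v = fun i => F i l} ≤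
        Submodule.span R {v : Fin n → R | ∃ j : Fin d, v = fun i => S i j}) ↔
      ∀ (ρ : Fin (d + 1) → Fin n) (τ : Fin d → Fin d) (l : Fin c),
        ((Matrix.fromCols S F).submatrix ρ (Fin.snoc (Sum.inl ∘ τ) (Sum.inr l))).det = 0) ∧
    ((Submodule.span R {v : Fin n → R | ∃ l : Fin c, v = fun i => F i l} ≤
        Submodule.span R {v : Fin n → R | ∃ j : Fin d, v = fun i => S i j}) ↔
      ∀ l : Fin c,
        ((List.finRange d).map fun j => ExteriorAlgebra.ι R (fun i => S i j)).prod *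
          ExteriorAlgebra.ι R (fun i => F i l) = 0) := by
  classical
  obtain ⟨α, -, hunit⟩ := hS
  set sCols : Fin d → (Fin n → R) := fun j i => S i j with hsCols
  set fCols : Fin c → (Fin n → R) := fun l i => F i l with hfCols
  have hsetS : {v : Fin n → R | ∃ j : Fin d, v = fun i => S i j} = Set.range sCols :=
    Set.ext fun v => ⟨fun ⟨j, h⟩ => ⟨j, h.symm⟩, fun ⟨j, h⟩ => ⟨j, h.symm⟩⟩
  have hsetF : {v : Fin n → R | ∃ l : Fin c, v = fun i => F i l} = Set.range fCols :=
    Set.ext fun v => ⟨fun ⟨l, h⟩ => ⟨l, h.symm⟩, fun ⟨l, h⟩ => ⟨l, h.symm⟩⟩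
  rw [hsetS, hsetF]
  set MM := Submodule.span R (Set.range sCols) with hMM
  have hspan : (Submodule.span R (Set.range fCols) ≤ MM) ↔ ∀ l, fCols l ∈ MM := by
    constructor
    · intro h l
      exact h (Submodule.subset_span ⟨l, rfl⟩)
    · intro h
      rw [Submodule.span_le]
      rintro v ⟨l, rfl⟩
      exact h l
  have hsmem : ∀ j, sCols j ∈ MM := fun j => Submodule.subset_span ⟨j, rfl⟩
  -- (1) → (2)
  have h12 : (∀ l, fCols l ∈ MM) → ∀ (ρ : Fin (d + 1) → Fin n) (σ : Fin (d + 1) → Fin d ⊕ Fin c),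
      ((Matrix.fromCols S F).submatrix ρ σ).det = 0 := by
    intro h1 ρ σ
    have key := alt_zero_of_span
      ((Matrix.detRowAlternating).compLinearMap (LinearMap.funLeft R R ρ)) sCols
      (fun k => Sum.elim sCols fCols (σ k)) (fun k => by
        cases hσ : σ k with
        | inl j => simp only [hσ, Sum.elim_inl]; exact hsmem j
        | inr l => simp only [hσ, Sum.elim_inr]; exact h1 l)
    have heq : ((Matrix.fromCols S F).submatrix ρ σ)ᵀ =
        Matrix.of fun k j => Sum.elim sCols fCols (σ k) (ρ j) := by
      ext k j
      cases hσ : σ k with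
      | inl i => simp [hσ, hsCols]
      | inr l => simp [hσ, hfCols]
    rw [← Matrix.det_transpose, heq]
    exact key
  -- (1) → (4)
  have h14 : (∀ l, fCols l ∈ MM) → ∀ l : Fin c,
      ((List.finRange d).map fun j => ExteriorAlgebra.ι R (fun i => S i j)).prod *
        ExteriorAlgebra.ι R (fun i => F i l) = 0 := by
    intro h1 l
    have key : ((List.finRange d).map fun j => ExteriorAlgebra.ι R (sCols j)).prod *
        ExteriorAlgebra.ι R (fCols l) = 0 := by
      rw [prod_mul_iota]
      exact alt_zero_of_span (ExteriorAlgebra.ιMulti R (d + 1)) sCols _ (fun k => by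
        refine Fin.lastCases ?_ ?_ k
        · simpa using h1 l
        · intro j; simpa using hsmem j)
    exact key
  -- (4) → (3)
  have h43 : (∀ l : Fin c,
      ((List.finRange d).map fun j => ExteriorAlgebra.ι R (fun i => S i j)).prod *
        ExteriorAlgebra.ι R (fun i => F i l) = 0) →
      ∀ (ρ : Fin (d + 1) → Fin n) (τ : Fin d → Fin d) (l : Fin c),
        ((Matrix.fromCols S F).submatrix ρ (Fin.snoc (Sum.inl ∘ τ) (Sum.inr l))).det = 0 := by
    intro h4 ρ τ l
    set w : Fin (d + 1) → (Fin n → R) := Fin.snoc sCols (fCols l) with hw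
    have hwm : ExteriorAlgebra.ιMulti R (d + 1) w = 0 := by
      rw [← prod_mul_iota]; exact h4 l
    set Aρ : (Fin n → R) [⋀^Fin (d + 1)]→ₗ[R] R :=
      (Matrix.detRowAlternating).compLinearMap (LinearMap.funLeft R R ρ) with hAρ
    have hAw : Aρ w = 0 := by
      have hl := ExteriorAlgebra.liftAlternating_apply_ιMulti
        (Function.update (fun i => (0 : (Fin n → R) [⋀^Fin i]→ₗ[R] R)) (d + 1) Aρ) w
      rw [hwm, map_zero, Function.update_self] at hl
      exact hl.symm
    set g : Fin (d + 1) → Fin (d + 1) := Fin.snoc (Fin.castSucc ∘ τ) (Fin.last d) with hg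
    have heq : ((Matrix.fromCols S F).submatrix ρ (Fin.snoc (Sum.inl ∘ τ) (Sum.inr l)))ᵀ =
        Matrix.of fun k j => (w ∘ g) k (ρ j) := by
      ext k j
      refine Fin.lastCases ?_ ?_ k
      · simp [hg, hw, hfCols]
      · intro q
        simp [hg, hw, hsCols]
    rw [← Matrix.det_transpose, heq]
    show Aρ (w ∘ g) = 0
    by_cases hinj : Function.Injective g
    · have hbij : Function.Bijective g := Finite.injective_iff_bijective.1 hinj
      set e : Equiv.Perm (Fin (d + 1)) := Equiv.ofBijective g hbij with he
      have hge : w ∘ g = w ∘ e := rfl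
      rw [hge, Aρ.map_perm w e, hAw, smul_zero]
    · rw [Function.not_injective_iff] at hinj
      obtain ⟨a, b, hab, hne⟩ := hinj
      exact Aρ.map_eq_zero_of_eq _ (congrArg w hab) hne
  -- (3) → (1)
  have h31 : (∀ (ρ : Fin (d + 1) → Fin n) (τ : Fin d → Fin d) (l : Fin c),
      ((Matrix.fromCols S F).submatrix ρ (Fin.snoc (Sum.inl ∘ τ) (Sum.inr l))).det = 0) →
      ∀ l, fCols l ∈ MM := by
    intro h3 l
    set A : Matrix (Fin d) (Fin d) R := S.submatrix α id with hA
    have : Invertible A := A.invertibleOfIsUnitDet hunit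
    set x : Fin d → R := (⅟A).mulVec (fun k => F (α k) l) with hx
    have hcast : ∀ q' : Fin d, finSumFinEquiv.symm (Fin.castSucc q') = Sum.inl q' :=
      fun q' => finSumFinEquiv_symm_apply_castAdd q'
    have hf : ∀ i, F i l = ∑ j, x j * S i j := by
      intro i
      set B : Matrix (Fin d) (Fin 1) R := Matrix.of fun j _ => F (α j) l with hB
      set C : Matrix (Fin 1) (Fin d) R := Matrix.of fun _ j => S i j with hC
      set D : Matrix (Fin 1) (Fin 1) R := Matrix.of fun _ _ => F i l with hD
      have h0 := h3 (Fin.snoc α i) id l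
      have hm : (Matrix.fromCols S F).submatrix (Fin.snoc α i)
          (Fin.snoc (Sum.inl ∘ id) (Sum.inr l)) =
          (Matrix.fromBlocks A B C D).submatrix finSumFinEquiv.symm finSumFinEquiv.symm := by
        ext p q
        refine Fin.lastCases ?_ (fun p' => ?_) p
        · refine Fin.lastCases ?_ (fun q' => ?_) q
          · simp [finSumFinEquiv_symm_last, hD]
          · simp [finSumFinEquiv_symm_last, hcast q', hC]
        · refine Fin.lastCases ?_ (fun q' => ?_) q
          · simp [finSumFinEquiv_symm_last, hcast p', hB]
          · simp [hcast p', hcast q', hA]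
      rw [hm, Matrix.det_submatrix_equiv_self, Matrix.det_fromBlocks₁₁] at h0
      have h0' : (D - C * ⅟A * B).det = 0 := by
        exact (hunit.mul_right_eq_zero).1 h0
      rw [Matrix.det_fin_one] at h0'
      have h0'' : F i l = (C * ⅟A * B) 0 0 := by
        have := sub_eq_zero.1 h0'
        simpa [hD] using this
      rw [h0'']
      simp only [Matrix.mul_apply, hx, Matrix.mulVec, dotProduct, hB, hC,
        Matrix.of_apply, Finset.sum_mul, Finset.mul_sum]
      rw [Finset.sum_comm]
      exact Finset.sum_congr rfl fun j _ => Finset.sum_congr rfl fun k _ => by ring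
    have hsum : fCols l = ∑ j, x j • sCols j := by
      funext i
      rw [Finset.sum_apply]
      simpa [hsCols, hfCols, smul_eq_mul] using hf i
    rw [hsum]
    exact Submodule.sum_mem _ fun j _ => Submodule.smul_mem _ _ (hsmem j)
  have k12 := fun h1 => h12 (hspan.1 h1)
  have k23 : (∀ (ρ : Fin (d + 1) → Fin n) (σ : Fin (d + 1) → Fin d ⊕ Fin c),
      ((Matrix.fromCols S F).submatrix ρ σ).det = 0) →
      ∀ (ρ : Fin (d + 1) → Fin n) (τ : Fin d → Fin d) (l : Fin c),
        ((Matrix.fromCols S F).submatrix ρ (Fin.snoc (Sum.inl ∘ τ) (Sum.inr l))).det = 0 :=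
    fun h2 ρ τ l => h2 ρ _
  have k31 := fun h3 => hspan.2 (h31 h3)
  exact ⟨⟨k12, fun h2 => k31 (k23 h2)⟩, ⟨fun h1 => k23 (k12 h1), k31⟩,
    ⟨fun h1 => h14 (hspan.1 h1), fun h4 => k31 (h43 h4)⟩⟩
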